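/- With median-of-three pivot selection from m ≥ 3 distinct elements (three samples uniform without replacement, pivot = median of the three), the probability that the pivot's rank X satisfies m/4 ≤ X ≤ 3m/4 is at least 1/2. -/

import Mathlib

open Finset

section MedianOfThreeAux

variable {α : Type*} [LinearOrder α] [DecidableEq α]

/-- The rank map `y ↦ #{x ∈ T | x < y}` is injective on `T`. -/
lemma mot_rank_injOn (T : Finset α) :
    Set.InjOn (fun y => (T.filter (· < y)).card) T := by
  intro y hy z hz h
  by_contra hne
  rcases lt_or_gt_of_ne hne with hlt | hlt
  · have : T.filter (· < y) ⊂ T.filter (· < z) := by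
      refine Finset.ssubset_iff_of_subset (Finset.monotone_filter_right _ ?_) |>.mpr ?_
      · intro x _ hx; exact hx.trans hlt
      · exact ⟨y, by simp [Finset.mem_filter]; exact ⟨hy, hlt⟩, by simp⟩
    exact absurd h (Nat.ne_of_lt (Finset.card_lt_card this))
  · have : T.filter (· < z) ⊂ T.filter (· < y) := by
      refine Finset.ssubset_iff_of_subset (Finset.monotone_filter_right _ ?_) |>.mpr ?_
      · intro x _ hx; exact hx.trans hlt
      · exact ⟨z, by simp [Finset.mem_filter]; exact ⟨hz, hlt⟩, by simp⟩
    exact absurd h.symm (Nat.ne_of_lt (Finset.card_lt_card this))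

/-- The rank map is a bijection from `T` onto `range T.card`. -/
lemma mot_rank_image (T : Finset α) :
    T.image (fun y => (T.filter (· < y)).card) = Finset.range T.card := by
  apply Finset.eq_of_subset_of_card_le
  · intro k hk
    simp only [Finset.mem_image] at hk
    obtain ⟨y, hy, rfl⟩ := hk
    have h1 : T.filter (· < y) ⊆ T.erase y := by
      intro x hx
      simp only [Finset.mem_filter] at hx
      exact Finset.mem_erase.mpr ⟨ne_of_lt hx.2, hx.1⟩
    have := Finset.card_le_card h1
    have h2 := Finset.card_erase_of_mem hy
    have h3 : 0 < T.card := Finset.card_pos.mpr ⟨y, hy⟩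
    simp only [Finset.mem_range]
    omega
  · rw [Finset.card_range, Finset.card_image_of_injOn (mot_rank_injOn T)]

/-- Elements below, `y` itself, and elements above partition `T`. -/
lemma mot_rank_split (T : Finset α) {y : α} (hy : y ∈ T) :
    (T.filter (· < y)).card + 1 + (T.filter (y < ·)).card = T.card := by
  have h := Finset.card_filter_add_card_filter_not (s := T) (p := (· < y))
  have h2 : T.filter (fun x => ¬ x < y) = insert y (T.filter (y < ·)) := by
    ext x
    simp only [Finset.mem_filter, Finset.mem_insert, not_lt]
    constructor
    · rintro ⟨hx, hle⟩
      rcases eq_or_lt_of_le hle with h | h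
      · exact Or.inl h.symm
      · exact Or.inr ⟨hx, h⟩
    · rintro (rfl | ⟨hx, h⟩)
      · exact ⟨hy, le_refl _⟩
      · exact ⟨hx, le_of_lt h⟩
  rw [h2] at h
  have h3 : y ∉ T.filter (y < ·) := by simp
  rw [Finset.card_insert_of_notMem h3] at h
  omega

/-- The 3-element subsets of `B` whose median is `y`. -/
def motMS (B : Finset α) (y : α) : Finset (Finset α) :=
  (B.powersetCard 3).filter (fun S => y ∈ S ∧ (S.filter (· < y)).card = 1)

lemma mot_triple_filter_lt {a y c : α} (hay : a < y) (hyc : y < c) :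
    ({a, y, c} : Finset α).filter (· < y) = {a} := by
  ext x
  simp only [Finset.mem_filter, Finset.mem_insert, Finset.mem_singleton]
  constructor
  · rintro ⟨(rfl | rfl | rfl), hx⟩
    · rfl
    · exact absurd hx (lt_irrefl _)
    · exact absurd (hx.trans hyc) (lt_irrefl _)
  · rintro rfl; exact ⟨Or.inl rfl, hay⟩

lemma mot_triple_card {a y c : α} (hay : a < y) (hyc : y < c) :
    ({a, y, c} : Finset α).card = 3 := by
  rw [Finset.card_insert_of_notMem, Finset.card_insert_of_notMem, Finset.card_singleton]
  · simp only [Finset.mem_singleton]; exact ne_of_lt hyc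
  · simp only [Finset.mem_insert, Finset.mem_singleton]
    push_neg
    exact ⟨ne_of_lt hay, ne_of_lt (hay.trans hyc)⟩

/-- Counting the 3-element subsets with median `y`. -/
lemma mot_card_MS (B : Finset α) {y : α} (hy : y ∈ B) :
    (motMS B y).card = (B.filter (· < y)).card * (B.filter (y < ·)).card := by
  rw [← Finset.card_product]
  symm
  apply Finset.card_bij (fun p _ => insert p.1 (insert y {p.2}))
  · rintro ⟨a, c⟩ hp
    simp only [Finset.mem_product, Finset.mem_filter] at hp
    obtain ⟨⟨haB, hay⟩, hcB, hyc⟩ := hp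
    simp only [motMS, Finset.mem_filter, Finset.mem_powersetCard]
    refine ⟨⟨?_, mot_triple_card hay hyc⟩, by simp,
      by rw [mot_triple_filter_lt hay hyc]; simp⟩
    intro x hx
    simp only [Finset.mem_insert, Finset.mem_singleton] at hx
    rcases hx with rfl | rfl | rfl <;> assumption
  · rintro ⟨a, c⟩ hp ⟨a', c'⟩ hp' h
    simp only [Finset.mem_product, Finset.mem_filter] at hp hp'
    obtain ⟨⟨haB, hay⟩, hcB, hyc⟩ := hp
    obtain ⟨⟨haB', hay'⟩, hcB', hyc'⟩ := hp'
    have ha : a ∈ ({a', y, c'} : Finset α) := h ▸ (by simp)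
    have hc : c ∈ ({a', y, c'} : Finset α) := h ▸ (by simp)
    simp only [Finset.mem_insert, Finset.mem_singleton] at ha hc
    have haa : a = a' := by
      rcases ha with rfl | rfl | rfl
      · rfl
      · exact absurd hay (lt_irrefl _)
      · exact absurd (hay.trans hyc') (lt_irrefl _)
    have hcc : c = c' := by
      rcases hc with rfl | rfl | rfl
      · exact absurd (hay'.trans hyc) (lt_irrefl _)
      · exact absurd hyc (lt_irrefl _)
      · rfl
    rw [haa, hcc]
  · intro S hS
    simp only [motMS, Finset.mem_filter, Finset.mem_powersetCard] at hS
    obtain ⟨⟨hSB, hS3⟩, hyS, hrk⟩ := hS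
    have hsplit : (S.filter (· < y)).card + 1 + (S.filter (y < ·)).card = S.card :=
      mot_rank_split S hyS
    have hgt : (S.filter (y < ·)).card = 1 := by omega
    obtain ⟨a, ha⟩ := Finset.card_eq_one.mp hrk
    obtain ⟨c, hc⟩ := Finset.card_eq_one.mp hgt
    have haS : a ∈ S ∧ a < y := by
      have : a ∈ S.filter (· < y) := ha ▸ Finset.mem_singleton_self a
      simpa using this
    have hcS : c ∈ S ∧ y < c := by
      have : c ∈ S.filter (y < ·) := hc ▸ Finset.mem_singleton_self c
      simpa using this
    refine ⟨⟨a, c⟩, ?_, ?_⟩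
    · simp only [Finset.mem_product, Finset.mem_filter]
      exact ⟨⟨hSB haS.1, haS.2⟩, hSB hcS.1, hcS.2⟩
    · symm
      apply Finset.eq_of_subset_of_card_le
      · intro x hx
        simp only [Finset.mem_insert, Finset.mem_singleton]
        rcases lt_trichotomy x y with h | h | h
        · have : x ∈ S.filter (· < y) := Finset.mem_filter.mpr ⟨hx, h⟩
          rw [ha] at this
          exact Or.inl (Finset.mem_singleton.mp this)
        · exact Or.inr (Or.inl h)
        · have : x ∈ S.filter (y < ·) := Finset.mem_filter.mpr ⟨hx, h⟩
          rw [hc] at this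
          exact Or.inr (Or.inr (Finset.mem_singleton.mp this))
      · rw [mot_triple_card haS.2 hcS.2, hS3]

omit [DecidableEq α] in
lemma mot_exists_median {S : Finset α} (hS : S.card = 3) :
    ∃ y ∈ S, (S.filter (· < y)).card = 1 := by
  have h1 : (1 : ℕ) ∈ Finset.range S.card := by rw [hS]; simp
  rw [← mot_rank_image S] at h1
  simpa using h1

omit [DecidableEq α] in
lemma mot_median_unique {S : Finset α} {y y' : α} (hy : y ∈ S) (hy' : y' ∈ S)
    (h1 : (S.filter (· < y)).card = 1) (h2 : (S.filter (· < y')).card = 1) : y = y' :=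
  mot_rank_injOn S hy hy' (h1.trans h2.symm)

lemma mot_MS_disj (B : Finset α) {y y' : α} (hne : y ≠ y') :
    Disjoint (motMS B y) (motMS B y') := by
  apply Finset.disjoint_left.mpr
  intro S hS hS'
  simp only [motMS, Finset.mem_filter] at hS hS'
  exact hne (mot_median_unique hS.2.1 hS'.2.1 hS.2.2 hS'.2.2)

lemma mot_powersetCard_eq_biUnion (B : Finset α) :
    B.powersetCard 3 = B.biUnion (motMS B) := by
  ext S
  simp only [Finset.mem_biUnion, motMS, Finset.mem_filter]
  constructor
  · intro hS
    obtain ⟨y, hyS, hmed⟩ := mot_exists_median (Finset.mem_powersetCard.mp hS).2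
    exact ⟨y, (Finset.mem_powersetCard.mp hS).1 hyS, hS, hyS, hmed⟩
  · rintro ⟨y, _, hS, _⟩
    exact hS

lemma mot_filter_eq_biUnion (B : Finset α) (m : ℕ) :
    (B.powersetCard 3).filter
        (fun S => ∃ y ∈ S, (S.filter (· < y)).card = 1 ∧
          m ≤ 4 * (B.filter (· < y)).card ∧ 4 * (B.filter (· < y)).card ≤ 3 * m)
      = (B.filter (fun y => m ≤ 4 * (B.filter (· < y)).card ∧
          4 * (B.filter (· < y)).card ≤ 3 * m)).biUnion (motMS B) := by
  ext S
  simp only [Finset.mem_biUnion, motMS, Finset.mem_filter]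
  constructor
  · rintro ⟨hS, y, hyS, hmed, hQ⟩
    exact ⟨y, ⟨(Finset.mem_powersetCard.mp hS).1 hyS, hQ⟩, hS, hyS, hmed⟩
  · rintro ⟨y, ⟨hyB, hQ⟩, hS, hyS, hmed⟩
    exact ⟨hS, y, hyS, hmed, hQ⟩

/-- Reindex a rank-filtered sum over `B` as a sum over `range m`. -/
lemma mot_sum_reindex (B : Finset α) (m : ℕ) (hB : B.card = m) (F : ℕ → ℕ)
    (p : ℕ → Prop) [DecidablePred p] :
    ∑ y ∈ B.filter (fun y => p ((B.filter (· < y)).card)), F ((B.filter (· < y)).card)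
      = ∑ k ∈ (Finset.range m).filter p, F k := by
  rw [← hB, ← mot_rank_image B, Finset.filter_image,
    Finset.sum_image (fun x hx y hy h => mot_rank_injOn B (Finset.filter_subset _ _ hx)
      (Finset.filter_subset _ _ hy) h)]

end MedianOfThreeAux

lemma mot_fmono (c k a : ℕ) (h1 : k ≤ a) (h2 : a + k ≤ c) :
    k * (c - k) ≤ a * (c - a) := by
  obtain ⟨u, rfl⟩ := Nat.exists_eq_add_of_le h1
  have hk : k ≤ c - (k + u) := by omega
  calc k * (c - k) = k * u + k * (c - (k + u)) := by rw [← Nat.mul_add]; congr 1; omega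
    _ ≤ u * (c - (k + u)) + k * (c - (k + u)) := by
        have : k * u ≤ u * (c - (k + u)) := by
          rw [Nat.mul_comm]; exact Nat.mul_le_mul_left u hk
        omega
    _ = (k + u) * (c - (k + u)) := by ring

/-- The key numeric inequality: medians with rank in `[m/4, 3m/4]` account for at
least half the weight `∑ k (m-1-k)`. -/
lemma mot_numeric_key (m : ℕ) (hm : 3 ≤ m) :
    ∑ k ∈ Finset.range m, k * (m - 1 - k)
      ≤ 2 * ∑ k ∈ (Finset.range m).filter (fun k => m ≤ 4 * k ∧ 4 * k ≤ 3 * m),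
          k * (m - 1 - k) := by
  set good : ℕ → Prop := fun k => m ≤ 4 * k ∧ 4 * k ≤ 3 * m with hgood
  have hsplit := Finset.sum_filter_add_sum_filter_not (Finset.range m) good
    (fun k => k * (m - 1 - k))
  set t := (m + 3) / 4 with ht
  set g : ℕ → ℕ := fun k => if 4 * k < m then k + t - 1 else k + 1 - t with hg
  set Bd := ((Finset.range m).filter (fun k => ¬ good k)).filter
    (fun k => 1 ≤ k ∧ k + 2 ≤ m) with hBd
  have hzero : ∑ k ∈ (Finset.range m).filter (fun k => ¬ good k), k * (m - 1 - k)
      = ∑ k ∈ Bd, k * (m - 1 - k) := by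
    rw [hBd]
    symm
    apply Finset.sum_filter_of_ne
    intro k hk hfk
    constructor
    · rcases Nat.eq_zero_or_pos k with rfl | h
      · simp at hfk
      · exact h
    · by_contra h
      have : m - 1 - k = 0 := by omega
      rw [this, Nat.mul_zero] at hfk
      exact hfk rfl
  have hmem : ∀ k ∈ Bd, k < m ∧ (4 * k < m ∨ 3 * m < 4 * k) ∧ 1 ≤ k ∧ k + 2 ≤ m := by
    intro k hk
    simp only [hBd, Finset.mem_filter, Finset.mem_range, hgood, not_and, not_le] at hk
    obtain ⟨⟨hk1, hk2⟩, hk3⟩ := hk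
    refine ⟨hk1, ?_, hk3⟩
    by_cases h : m ≤ 4 * k
    · exact Or.inr (hk2 h)
    · exact Or.inl (by omega)
  have h4t1 : m ≤ 4 * t := by omega
  have h4t2 : 4 * t ≤ m + 3 := by omega
  have ht1 : 1 ≤ t := by omega
  have hterm : ∀ k ∈ Bd, k * (m - 1 - k) ≤ g k * (m - 1 - g k) := by
    intro k hk
    obtain ⟨hk1, hk2, hk3, hk4⟩ := hmem k hk
    by_cases hc : 4 * k < m
    · simp only [hg, if_pos hc]
      exact mot_fmono (m - 1) k (k + t - 1) (by omega) (by omega)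
    · simp only [hg, if_neg hc]
      have hk2' : 3 * m < 4 * k := hk2.resolve_left (by omega)
      have heq : k * (m - 1 - k) = (m - 1 - k) * (m - 1 - (m - 1 - k)) := by
        rw [Nat.mul_comm]; congr 1; omega
      rw [heq]
      exact mot_fmono (m - 1) (m - 1 - k) (k + 1 - t) (by omega) (by omega)
  have himg : ∀ k ∈ Bd, g k ∈ (Finset.range m).filter good := by
    intro k hk
    obtain ⟨hk1, hk2, hk3, hk4⟩ := hmem k hk
    simp only [Finset.mem_filter, Finset.mem_range, hgood]
    by_cases hc : 4 * k < m
    · simp only [hg, if_pos hc]; omega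
    · have hk2' : 3 * m < 4 * k := hk2.resolve_left (by omega)
      simp only [hg, if_neg hc]; omega
  have hinj : ∀ k ∈ Bd, ∀ k' ∈ Bd, g k = g k' → k = k' := by
    intro k hk k' hk' h
    obtain ⟨hk1, hk2, hk3, hk4⟩ := hmem k hk
    obtain ⟨hk1', hk2', hk3', hk4'⟩ := hmem k' hk'
    simp only [hg] at h
    split_ifs at h <;> omega
  have hchain : ∑ k ∈ Bd, k * (m - 1 - k)
      ≤ ∑ k ∈ (Finset.range m).filter good, k * (m - 1 - k) := by
    calc ∑ k ∈ Bd, k * (m - 1 - k) ≤ ∑ k ∈ Bd, g k * (m - 1 - g k) :=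
          Finset.sum_le_sum hterm
      _ = ∑ a ∈ Bd.image g, a * (m - 1 - a) :=
          (Finset.sum_image (f := fun a => a * (m - 1 - a)) hinj).symm
      _ ≤ ∑ k ∈ (Finset.range m).filter good, k * (m - 1 - k) := by
          apply Finset.sum_le_sum_of_subset
          intro a ha
          obtain ⟨k, hk, rfl⟩ := Finset.mem_image.mp ha
          exact himg k hk
  have hsame : (Finset.range m).filter good
      = (Finset.range m).filter (fun k => m ≤ 4 * k ∧ 4 * k ≤ 3 * m) := rfl
  rw [← hsame]
  have e1 : ∑ x ∈ (Finset.range m).filter (fun x => good x), x * (m - 1 - x)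
      = ∑ k ∈ (Finset.range m).filter good, k * (m - 1 - k) := rfl
  have e2 : ∑ x ∈ (Finset.range m).filter (fun x => ¬ good x), x * (m - 1 - x)
      = ∑ k ∈ (Finset.range m).filter (fun k => ¬ good k), k * (m - 1 - k) := rfl
  omega

/-- Median-of-three pivots give a constant-factor split: with the pivot chosen
as the median of a uniformly random 3-element subset of `m ≥ 3` distinct
elements, the probability that the pivot's rank `X` (number of strictly
smaller elements) satisfies `m/4 ≤ X ≤ 3m/4` is at least `1/2`. -/
theorem median_of_three_balanced_split {α : Type*} [LinearOrder α] [DecidableEq α]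
    (B : Finset α) (m : ℕ) (hm : 3 ≤ m) (hB : B.card = m) :
    (1 : ℝ) / 2 ≤
      (((B.powersetCard 3).filter
          (fun S => ∃ y ∈ S, (S.filter (· < y)).card = 1 ∧
            m ≤ 4 * (B.filter (· < y)).card ∧ 4 * (B.filter (· < y)).card ≤ 3 * m)).card : ℝ)
        / ((B.powersetCard 3).card : ℝ) := by
  -- per-median count, rewritten with `m - 1 - rank`
  have hMS : ∀ y ∈ B, (motMS B y).card
      = (fun k => k * (m - 1 - k)) ((B.filter (· < y)).card) := by
    intro y hy
    rw [mot_card_MS B hy]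
    have := mot_rank_split B hy
    rw [hB] at this
    congr 1
    omega
  -- total count
  have htotal : (B.powersetCard 3).card = ∑ k ∈ Finset.range m, k * (m - 1 - k) := by
    rw [mot_powersetCard_eq_biUnion B,
      Finset.card_biUnion (fun y _ y' _ hne => mot_MS_disj B hne)]
    calc ∑ y ∈ B, (motMS B y).card
        = ∑ y ∈ B.filter (fun y => True),
            (fun k => k * (m - 1 - k)) ((B.filter (· < y)).card) := by
          rw [Finset.filter_true]
          exact Finset.sum_congr rfl hMS
      _ = ∑ k ∈ (Finset.range m).filter (fun _ => True), k * (m - 1 - k) :=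
          mot_sum_reindex B m hB (fun k => k * (m - 1 - k)) (fun _ => True)
      _ = ∑ k ∈ Finset.range m, k * (m - 1 - k) := by rw [Finset.filter_true]
  -- good count
  have hgoodc : ((B.powersetCard 3).filter
        (fun S => ∃ y ∈ S, (S.filter (· < y)).card = 1 ∧
          m ≤ 4 * (B.filter (· < y)).card ∧ 4 * (B.filter (· < y)).card ≤ 3 * m)).card
      = ∑ k ∈ (Finset.range m).filter (fun k => m ≤ 4 * k ∧ 4 * k ≤ 3 * m),
          k * (m - 1 - k) := by
    rw [mot_filter_eq_biUnion B m,
      Finset.card_biUnion (fun y _ y' _ hne => mot_MS_disj B hne)]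
    calc ∑ y ∈ B.filter (fun y => m ≤ 4 * (B.filter (· < y)).card ∧
            4 * (B.filter (· < y)).card ≤ 3 * m), (motMS B y).card
        = ∑ y ∈ B.filter (fun y => m ≤ 4 * (B.filter (· < y)).card ∧
            4 * (B.filter (· < y)).card ≤ 3 * m),
            (fun k => k * (m - 1 - k)) ((B.filter (· < y)).card) :=
          Finset.sum_congr rfl (fun y hy => hMS y (Finset.filter_subset _ _ hy))
      _ = ∑ k ∈ (Finset.range m).filter (fun k => m ≤ 4 * k ∧ 4 * k ≤ 3 * m),
            k * (m - 1 - k) :=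
          mot_sum_reindex B m hB (fun k => k * (m - 1 - k)) (fun k => m ≤ 4 * k ∧ 4 * k ≤ 3 * m)
  -- total is positive
  have hpos : 0 < (B.powersetCard 3).card := by
    rw [Finset.card_powersetCard, hB]
    exact Nat.choose_pos hm
  -- the counting inequality
  have hkey : (B.powersetCard 3).card
      ≤ 2 * ((B.powersetCard 3).filter
          (fun S => ∃ y ∈ S, (S.filter (· < y)).card = 1 ∧
            m ≤ 4 * (B.filter (· < y)).card ∧ 4 * (B.filter (· < y)).card ≤ 3 * m)).card := by
    rw [htotal, hgoodc]
    exact mot_numeric_key m hm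
  -- conclude over ℝ
  have hposR : (0 : ℝ) < ((B.powersetCard 3).card : ℝ) := by exact_mod_cast hpos
  rw [le_div_iff₀ hposR]
  have : ((B.powersetCard 3).card : ℝ)
      ≤ 2 * (((B.powersetCard 3).filter
          (fun S => ∃ y ∈ S, (S.filter (· < y)).card = 1 ∧
            m ≤ 4 * (B.filter (· < y)).card ∧ 4 * (B.filter (· < y)).card ≤ 3 * m)).card : ℝ) := by
    exact_mod_cast hkey
  linarith
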